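/- arXiv:2601.19464 — 2 statements merged into one kernel-verified Lean document; each statement's English description precedes it below -/
import Mathlib

section
/- Define the kernel K(k) = ∫_ℝ exp(−β ε(p) − i β 𝔇 k p) dp / (2π) for k ∈ ℝ. Then K(k) is real for every k, and for every t ≥ 0 and x ∈ ℝ the particle density n(t,x) = ∫_ℝ f(t,x,p) dp / (2π) satisfies n(t,x) = exp(α) · K(0) + ∫_ℝ g(k) · K(k) · exp(i k x − 𝔇 k² t) dk / (2π). In particular, at t = 0 the density equals the inverse Fourier transform of g(k) · K(k) shifted by the constant exp(α) · K(0). -/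
open MeasureTheory

/-- Relativistic energy `ε(p) = √(m² + p²)`. -/
noncomputable def eps (m p : ℝ) : ℝ := Real.sqrt (m ^ 2 + p ^ 2)

/-- The distribution function
`f(t,x,p) = exp(α − β ε(p)) + (1/2π) ∫ g(k) exp(−β ε(p) − i β 𝔇 k p + i k x − 𝔇 k² t) dk`. -/
noncomputable def fdist (m β D α : ℝ) (g : ℝ → ℂ) (t x p : ℝ) : ℂ :=
  Complex.exp (↑(α - β * eps m p)) +
    (2 * Real.pi)⁻¹ * ∫ k : ℝ, g k * Complex.exp (-(↑(β * eps m p))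
      - Complex.I * ↑(β * D * k * p) + Complex.I * ↑(k * x) - ↑(D * k ^ 2 * t))

/-- The particle density `n(t,x) = ∫ f(t,x,p) dp / (2π)`. -/
noncomputable def ndens (m β D α : ℝ) (g : ℝ → ℂ) (t x : ℝ) : ℂ :=
  (2 * Real.pi)⁻¹ * ∫ p : ℝ, fdist m β D α g t x p

/-- The density kernel `K(k) = ∫ exp(−β ε(p) − i β 𝔇 k p) dp / (2π)`. -/
noncomputable def densKernel (m β D : ℝ) (k : ℝ) : ℂ :=
  (2 * Real.pi)⁻¹ *
    ∫ p : ℝ, Complex.exp (-(↑(β * eps m p)) - Complex.I * ↑(β * D * k * p))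

lemma eps_neg' (m p : ℝ) : eps m (-p) = eps m p := by simp [eps]

lemma abs_le_eps' (m p : ℝ) : |p| ≤ eps m p := by
  rw [eps, ← Real.sqrt_sq_eq_abs]
  exact Real.sqrt_le_sqrt (by nlinarith [sq_nonneg m])

lemma eps_continuous' (m : ℝ) : Continuous (eps m) :=
  (continuous_const.add (continuous_pow 2)).sqrt

lemma integrable_E' (m β : ℝ) (hβ : 0 < β) :
    Integrable (fun p : ℝ => Real.exp (-(β * eps m p))) := by
  have hcont : Continuous fun p : ℝ => Real.exp (-(β * eps m p)) :=
    ((continuous_const.mul (eps_continuous' m)).neg).rexp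
  have hIoi : IntegrableOn (fun p : ℝ => Real.exp (-(β * eps m p))) (Set.Ioi 0) := by
    refine Integrable.mono' (exp_neg_integrableOn_Ioi 0 hβ)
      hcont.aestronglyMeasurable.restrict ?_
    filter_upwards [ae_restrict_mem measurableSet_Ioi] with p hp
    rw [Real.norm_eq_abs, abs_of_nonneg (Real.exp_pos _).le]
    apply Real.exp_le_exp.2
    have := abs_le_eps' m p
    have hp0 : (0:ℝ) ≤ p := le_of_lt hp
    rw [abs_of_nonneg hp0] at this
    nlinarith
  rw [← integrableOn_univ, ← Set.Iio_union_Ici (a := (0:ℝ)), integrableOn_union,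
    integrableOn_Ici_iff_integrableOn_Ioi]
  refine ⟨?_, hIoi⟩
  rw [← (Measure.measurePreserving_neg (volume : Measure ℝ)).integrableOn_comp_preimage
      (Homeomorph.neg ℝ).measurableEmbedding]
  simp only [Function.comp_def, Set.neg_preimage, Set.neg_Iio, neg_neg, neg_zero, eps_neg']
  exact hIoi

lemma densKernel_im' (m β D k : ℝ) : (densKernel m β D k).im = 0 := by
  set I : ℂ := ∫ p : ℝ, Complex.exp (-(↑(β * eps m p)) - Complex.I * ↑(β * D * k * p)) with hI
  have hconj : (starRingEnd ℂ) I = I := by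
    rw [hI, ← integral_conj]
    rw [← integral_neg_eq_self
      (fun p : ℝ => Complex.exp (-(↑(β * eps m p)) - Complex.I * ↑(β * D * k * p))) volume]
    congr 1
    funext p
    rw [← Complex.exp_conj]
    congr 1
    simp [eps_neg', Complex.ext_iff]
  have him : I.im = 0 := Complex.conj_eq_iff_im.mp hconj
  have h : densKernel m β D k = ((2 * Real.pi)⁻¹ : ℝ) * I := rfl
  rw [h]
  simp [Complex.mul_im, him]

/-- the kernel `K(k)` is real for every `k`, and for every `t ≥ 0`, `x ∈ ℝ`
the particle density satisfies
`n(t,x) = exp(α)·K(0) + ∫ g(k)·K(k)·exp(i k x − 𝔇 k² t) dk / (2π)`. -/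
theorem ndens_kernel_representation (m β D α : ℝ) (hm : 0 < m) (hβ : 0 < β) (hD : 0 < D)
    (g : SchwartzMap ℝ ℂ) (hg : ∀ k : ℝ, g (-k) = (starRingEnd ℂ) (g k)) :
    (∀ k : ℝ, (densKernel m β D k).im = 0) ∧
    (∀ t : ℝ, 0 ≤ t → ∀ x : ℝ,
      ndens m β D α (⇑g) t x
        = Complex.exp (↑α) * densKernel m β D 0 +
          (2 * Real.pi)⁻¹ * ∫ k : ℝ, g k * densKernel m β D k *
            Complex.exp (Complex.I * ↑(k * x) - ↑(D * k ^ 2 * t))) := by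
  refine ⟨densKernel_im' m β D, fun t ht x => ?_⟩
  have hE := integrable_E' m β hβ
  set Fk : ℝ → ℝ → ℂ := fun p k => g k * Complex.exp (-(↑(β * eps m p))
      - Complex.I * ↑(β * D * k * p) + Complex.I * ↑(k * x) - ↑(D * k ^ 2 * t)) with hFk
  -- continuity
  have hFc : Continuous fun q : ℝ × ℝ => Fk q.1 q.2 := by
    apply Continuous.mul (g.continuous.comp continuous_snd)
    apply Complex.continuous_exp.comp
    refine Continuous.sub (Continuous.add (Continuous.sub ?_ ?_) ?_) ?_
    · exact (Complex.continuous_ofReal.comp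
        (continuous_const.mul ((eps_continuous' m).comp continuous_fst))).neg
    · exact continuous_const.mul (Complex.continuous_ofReal.comp
        ((continuous_const.mul continuous_snd).mul continuous_fst))
    · exact continuous_const.mul (Complex.continuous_ofReal.comp
        (continuous_snd.mul continuous_const))
    · exact Complex.continuous_ofReal.comp
        ((continuous_const.mul (continuous_snd.pow 2)).mul continuous_const)
  -- integrability on the product
  have hInt : Integrable (Function.uncurry Fk) ((volume : Measure ℝ).prod volume) := by
    have hG : Integrable (fun q : ℝ × ℝ => Real.exp (-(β * eps m q.1)) * ‖g q.2‖)
        ((volume : Measure ℝ).prod volume) := hE.mul_prod g.integrable.norm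
    refine hG.mono' ?_ ?_
    · rw [← Measure.volume_eq_prod]
      exact hFc.aestronglyMeasurable
    · filter_upwards with q
      rw [Function.uncurry, hFk]
      simp only [norm_mul, Complex.norm_exp]
      rw [mul_comm]
      have hre : (-(↑(β * eps m q.1)) - Complex.I * ↑(β * D * q.2 * q.1)
          + Complex.I * ↑(q.2 * x) - ↑(D * q.2 ^ 2 * t) : ℂ).re
          = -(β * eps m q.1) - D * q.2 ^ 2 * t := by simp [← Complex.ofReal_pow]
      rw [hre]
      apply mul_le_mul_of_nonneg_right _ (norm_nonneg _)
      apply Real.exp_le_exp.2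
      nlinarith [sq_nonneg q.2, mul_nonneg (mul_nonneg hD.le (sq_nonneg q.2)) ht]
  -- integrability of the first summand
  have hI1 : Integrable (fun p : ℝ => Complex.exp (↑(α - β * eps m p))) volume := by
    have h1 : (fun p : ℝ => Complex.exp (↑(α - β * eps m p)))
        = fun p : ℝ => ((Real.exp α * Real.exp (-(β * eps m p)) : ℝ) : ℂ) := by
      funext p
      rw [← Complex.ofReal_exp, ← Real.exp_add]
      ring_nf
    rw [h1]
    exact (hE.const_mul (Real.exp α)).ofReal
  have hI2 : Integrable (fun p : ℝ => ∫ k : ℝ, Fk p k) volume := by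
    have := hInt.integral_prod_left
    exact this
  -- main computation
  unfold ndens fdist
  rw [integral_add hI1 (hI2.const_mul _)]
  rw [integral_const_mul]
  rw [integral_integral_swap hInt]
  -- inner p-integral
  have hInner : ∀ k : ℝ, (∫ p : ℝ, Fk p k)
      = g k * Complex.exp (Complex.I * ↑(k * x) - ↑(D * k ^ 2 * t))
        * ∫ p : ℝ, Complex.exp (-(↑(β * eps m p)) - Complex.I * ↑(β * D * k * p)) := by
    intro k
    rw [← integral_const_mul]
    congr 1
    funext p
    simp only [hFk]
    have : (-(↑(β * eps m p)) - Complex.I * ↑(β * D * k * p) + Complex.I * ↑(k * x)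
        - ↑(D * k ^ 2 * t) : ℂ)
        = (-(↑(β * eps m p)) - Complex.I * ↑(β * D * k * p))
          + (Complex.I * ↑(k * x) - ↑(D * k ^ 2 * t)) := by ring
    rw [this, Complex.exp_add]
    ring
  simp_rw [hInner]
  -- first integral
  have hFirst : (∫ p : ℝ, Complex.exp (↑(α - β * eps m p)))
      = Complex.exp (↑α) * ∫ p : ℝ, Complex.exp
        (-(↑(β * eps m p)) - Complex.I * ↑(β * D * (0:ℝ) * p)) := by
    rw [← integral_const_mul]
    congr 1
    funext p
    rw [← Complex.exp_add]
    congr 1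
    push_cast
    ring
  rw [hFirst]
  -- assemble
  unfold densKernel
  set I0 : ℂ := ∫ p : ℝ, Complex.exp (-(↑(β * eps m p)) - Complex.I * ↑(β * D * (0:ℝ) * p))
  set c : ℂ := (((2 * Real.pi)⁻¹ : ℝ) : ℂ)
  have hRHS : (∫ k : ℝ, g k * ((c : ℂ) *
        ∫ p : ℝ, Complex.exp (-(↑(β * eps m p)) - Complex.I * ↑(β * D * k * p))) *
        Complex.exp (Complex.I * ↑(k * x) - ↑(D * k ^ 2 * t)))
      = c * ∫ k : ℝ, g k * Complex.exp (Complex.I * ↑(k * x) - ↑(D * k ^ 2 * t))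
        * ∫ p : ℝ, Complex.exp (-(↑(β * eps m p)) - Complex.I * ↑(β * D * k * p)) := by
    rw [← integral_const_mul]
    congr 1
    funext k
    ring
  rw [hRHS]
  ring
end

section
/- Let Γ ∈ ℝ and let δf : ℝ → ℂ be a continuously differentiable function, not identically zero, such that the function λ(p) = δf′(p) + β v(p) δf(p) is differentiable and satisfies the mode equation Γ (1 − v(p) V) δf(p) = (1/(β² 𝔇 γ)) λ′(p) for all p ∈ ℝ. Assume that p ↦ exp(β ε(p)) |δf(p)|² and p ↦ exp(β ε(p)) |λ(p)|² are integrable over ℝ, and that exp(β ε(p)) · conj(δf(p)) · λ(p) → 0 as p → ±∞. Then Γ · ∫_ℝ (1 − v(p) V) exp(β ε(p)) |δf(p)|² dp = −(1/(β² 𝔇 γ)) · ∫_ℝ exp(β ε(p)) |λ(p)|² dp, and consequently Γ ≤ 0. -/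
open MeasureTheory Filter

/-- Relativistic velocity `v(p) = p/ε(p)`. -/
noncomputable def vel (m p : ℝ) : ℝ := p / eps m p

lemma eps_pos {m : ℝ} (hm : 0 < m) (p : ℝ) : 0 < eps m p :=
  Real.sqrt_pos.mpr (by positivity)

lemma hasDerivAt_eps {m : ℝ} (hm : 0 < m) (p : ℝ) :
    HasDerivAt (eps m) (vel m p) p := by
  have h1 : HasDerivAt (fun q : ℝ => m ^ 2 + q ^ 2) (2 * p) p := by
    simpa using (hasDerivAt_pow 2 p).const_add (m ^ 2)
  have h2 := (Real.hasDerivAt_sqrt (x := m ^ 2 + p ^ 2) (by positivity)).comp p h1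
  refine h2.congr_deriv ?_
  have := (eps_pos hm p)
  rw [vel, eps]
  ring

lemma continuous_vel {m : ℝ} (hm : 0 < m) : Continuous (vel m) :=
  continuous_id.div (Real.continuous_sqrt.comp (by continuity)) (fun p => (eps_pos hm p).ne')

lemma abs_vel_lt {m : ℝ} (hm : 0 < m) (p : ℝ) : |vel m p| < 1 := by
  have he := eps_pos hm p
  rw [vel, abs_div, abs_of_pos he, div_lt_one he]
  have : |p| = Real.sqrt (p ^ 2) := (Real.sqrt_sq_eq_abs p).symm
  rw [this, eps]
  exact Real.sqrt_lt_sqrt (by positivity) (by nlinarith)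

lemma conj_mul_self (w : ℂ) : (starRingEnd ℂ) w * w = ((‖w‖ ^ 2 : ℝ) : ℂ) := by
  rw [mul_comm, Complex.mul_conj, Complex.normSq_eq_norm_sq]

lemma one_sub_vel_mul_pos {m : ℝ} (hm : 0 < m) (V : ℝ) (hV1 : |V| < 1) (p : ℝ) :
    0 < 1 - vel m p * V := by
  nlinarith [le_abs_self (vel m p * V), abs_mul (vel m p) V, abs_vel_lt hm p, abs_nonneg V,
    abs_nonneg (vel m p)]


/-- for a boosted homogeneous mode of the relativistic Vlasov–Fokker–Planck
equation, with `λ(p) = δf′(p) + β v(p) δf(p)` and mode equation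
`Γ (1 − v V) δf = (β²𝔇γ)⁻¹ λ′`, under integrability and decay assumptions one has
`Γ ∫ (1 − v V) e^{βε} |δf|² = −(β²𝔇γ)⁻¹ ∫ e^{βε} |λ|²`, and consequently `Γ ≤ 0`. -/
theorem boosted_mode_stable (m β D : ℝ) (hm : 0 < m) (hβ : 0 < β) (hD : 0 < D)
    (V : ℝ) (hV0 : 0 < |V|) (hV1 : |V| < 1)
    (γ : ℝ) (hγ : γ = 1 / Real.sqrt (1 - V ^ 2))
    (Γ : ℝ) (δf : ℝ → ℂ) (hC1 : ContDiff ℝ 1 δf)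
    (hne : ∃ p : ℝ, δf p ≠ 0)
    (lam : ℝ → ℂ)
    (hlam : ∀ p : ℝ, lam p = deriv δf p + ↑(β * vel m p) * δf p)
    (hlamdiff : Differentiable ℝ lam)
    (hmode : ∀ p : ℝ, (↑Γ : ℂ) * (1 - ↑(vel m p * V)) * δf p
      = ((1 / (β ^ 2 * D * γ) : ℝ) : ℂ) * deriv lam p)
    (hint1 : Integrable (fun p : ℝ => Real.exp (β * eps m p) * ‖δf p‖ ^ 2))
    (hint2 : Integrable (fun p : ℝ => Real.exp (β * eps m p) * ‖lam p‖ ^ 2))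
    (hdecayTop : Tendsto (fun p : ℝ =>
      ↑(Real.exp (β * eps m p)) * (starRingEnd ℂ) (δf p) * lam p) atTop (nhds 0))
    (hdecayBot : Tendsto (fun p : ℝ =>
      ↑(Real.exp (β * eps m p)) * (starRingEnd ℂ) (δf p) * lam p) atBot (nhds 0)) :
    Γ * (∫ p : ℝ, (1 - vel m p * V) * Real.exp (β * eps m p) * ‖δf p‖ ^ 2)
      = -(1 / (β ^ 2 * D * γ)) * ∫ p : ℝ, Real.exp (β * eps m p) * ‖lam p‖ ^ 2 ∧
    Γ ≤ 0 := by
  have hV2 : 0 < 1 - V ^ 2 := by nlinarith [sq_abs V, abs_nonneg V]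
  have hγ0 : 0 < γ := by rw [hγ]; positivity
  have hk : 0 < β ^ 2 * D * γ := by positivity
  set k : ℝ := β ^ 2 * D * γ with hkdef
  have hk0 : k ≠ 0 := hk.ne'
  -- solve the mode equation for `deriv lam`
  have hmode' : ∀ p : ℝ, deriv lam p
      = (↑(Γ * k) : ℂ) * (1 - ↑(vel m p * V)) * δf p := by
    intro p
    have h := (hmode p).symm
    have hkc : (k : ℂ) ≠ 0 := by exact_mod_cast hk0
    field_simp at h
    push_cast
    rw [Complex.ofReal_div, Complex.ofReal_one, one_div, inv_mul_eq_iff_eq_mul₀ hkc] at h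
    rw [h]; push_cast; ring
  -- the pointwise derivative identity
  have hδd : ∀ p, HasDerivAt δf (deriv δf p) p :=
    fun p => ((hC1.differentiable one_ne_zero) p).hasDerivAt
  set E : ℝ → ℝ := fun p => Real.exp (β * eps m p) with hE
  have hEd : ∀ p, HasDerivAt E (β * vel m p * E p) p := by
    intro p
    have := (Real.hasDerivAt_exp (β * eps m p)).comp p ((hasDerivAt_eps hm p).const_mul β)
    exact this.congr_deriv (by simp only [hE]; ring)
  set F : ℝ → ℂ := fun p => ↑(E p) * (starRingEnd ℂ) (δf p) * lam p with hF
  set g : ℝ → ℝ := fun p => E p * ‖lam p‖ ^ 2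
      + Γ * k * ((1 - vel m p * V) * (E p * ‖δf p‖ ^ 2)) with hg
  have hFd : ∀ p, HasDerivAt F ((g p : ℂ)) p := by
    intro p
    have h1 : HasDerivAt (fun q => (E q : ℂ)) (↑(β * vel m p * E p)) p :=
      (hEd p).ofReal_comp
    have h2 : HasDerivAt (fun q => (starRingEnd ℂ) (δf q))
        ((starRingEnd ℂ) (deriv δf p)) p := (hδd p).star
    have h3 := (hlamdiff p).hasDerivAt
    have h4 := (h1.mul h2).mul h3
    refine h4.congr_deriv ?_
    symm
    have hconj : (starRingEnd ℂ) (deriv δf p)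
        = (starRingEnd ℂ) (lam p) - ↑(β * vel m p) * (starRingEnd ℂ) (δf p) := by
      rw [hlam p]
      simp [map_add, map_mul, Complex.conj_ofReal]
    rw [hconj, hmode' p]
    have hml := conj_mul_self (lam p)
    have hmd := conj_mul_self (δf p)
    simp only [hg, Pi.mul_apply]
    push_cast at hml hmd ⊢
    linear_combination (-(E p : ℂ)) * hml
      + (-(Γ * k : ℂ)) * (1 - (vel m p : ℂ) * V) * (E p : ℂ) * hmd
  -- integrability
  have hcont_vel : Continuous (vel m) := continuous_vel hm
  have hmeas : AEStronglyMeasurable (fun p : ℝ => 1 - vel m p * V) volume :=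
    (continuous_const.sub (hcont_vel.mul continuous_const)).aestronglyMeasurable
  have hbd : ∀ p : ℝ, ‖1 - vel m p * V‖ ≤ 2 := by
    intro p
    have h1 := abs_vel_lt hm p
    have := abs_mul (vel m p) V
    rw [Real.norm_eq_abs]
    rw [abs_sub_le_iff]
    constructor <;> nlinarith [abs_nonneg V, abs_nonneg (vel m p), le_abs_self (vel m p * V),
      neg_abs_le (vel m p * V)]
  have hint1' : Integrable (fun p : ℝ => (1 - vel m p * V) * (E p * ‖δf p‖ ^ 2)) :=
    hint1.bdd_mul hmeas (Filter.Eventually.of_forall hbd)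
  have hgint : Integrable g := hint2.add (hint1'.const_mul (Γ * k))
  have hgCint : Integrable (fun p : ℝ => (g p : ℂ)) := hgint.ofReal
  -- FTC on the whole line
  have key : ∫ p : ℝ, (g p : ℂ) = 0 := by
    have h1 : Tendsto (fun R : ℝ => ∫ x in (-R)..R, (g x : ℂ)) atTop
        (nhds (∫ p : ℝ, (g p : ℂ))) :=
      intervalIntegral_tendsto_integral hgCint tendsto_neg_atTop_atBot tendsto_id
    have h2 : ∀ R : ℝ, ∫ x in (-R)..R, (g x : ℂ) = F R - F (-R) := fun R =>
      intervalIntegral.integral_eq_sub_of_hasDerivAt (fun x _ => hFd x)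
        hgCint.intervalIntegrable
    have h3 : Tendsto (fun R : ℝ => F R - F (-R)) atTop (nhds 0) := by
      have := hdecayTop.sub (hdecayBot.comp tendsto_neg_atTop_atBot)
      simpa [hF, hE, Function.comp] using this
    refine tendsto_nhds_unique ?_ h3
    simpa only [h2] using h1
  have keyR : ∫ p : ℝ, g p = 0 := by
    have h : ((∫ p : ℝ, g p : ℝ) : ℂ) = ∫ p : ℝ, ((g p : ℝ) : ℂ) :=
      (integral_ofReal (𝕜 := ℂ)).symm
    rw [key] at h
    exact_mod_cast h
  set J : ℝ := ∫ p : ℝ, Real.exp (β * eps m p) * ‖lam p‖ ^ 2 with hJ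
  set I : ℝ := ∫ p : ℝ, (1 - vel m p * V) * (E p * ‖δf p‖ ^ 2) with hI
  have hsplit : J + Γ * k * I = 0 := by
    rw [hJ, hI, ← integral_const_mul, ← integral_add hint2 (hint1'.const_mul (Γ * k))]
    exact keyR
  -- positivity of I
  have hf_nonneg : ∀ p : ℝ, 0 ≤ (1 - vel m p * V) * (E p * ‖δf p‖ ^ 2) := by
    intro p
    have := one_sub_vel_mul_pos hm V hV1 p
    have : 0 < E p := Real.exp_pos _
    positivity
  have hepscont : Continuous (eps m) :=
    Real.continuous_sqrt.comp (continuous_const.add (continuous_pow 2))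
  have hEcont : Continuous E := Real.continuous_exp.comp (continuous_const.mul hepscont)
  have hf_cont : Continuous (fun p : ℝ => (1 - vel m p * V) * (E p * ‖δf p‖ ^ 2)) :=
    (continuous_const.sub (hcont_vel.mul continuous_const)).mul
      (hEcont.mul ((hC1.continuous.norm).pow 2))
  have hIpos : 0 < I := by
    rw [hI]
    refine (integral_pos_iff_support_of_nonneg hf_nonneg hint1').mpr ?_
    obtain ⟨p₀, hp₀⟩ := hne
    have hopen : IsOpen {p : ℝ | 0 < (1 - vel m p * V) * (E p * ‖δf p‖ ^ 2)} :=
      isOpen_lt continuous_const hf_cont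
    have hsub : {p : ℝ | 0 < (1 - vel m p * V) * (E p * ‖δf p‖ ^ 2)}
        ⊆ Function.support (fun p => (1 - vel m p * V) * (E p * ‖δf p‖ ^ 2)) :=
      fun p hp => ne_of_gt hp
    have hp₀mem : p₀ ∈ {p : ℝ | 0 < (1 - vel m p * V) * (E p * ‖δf p‖ ^ 2)} := by
      have h1 := one_sub_vel_mul_pos hm V hV1 p₀
      have h2 : 0 < E p₀ := Real.exp_pos _
      have h3 : 0 < ‖δf p₀‖ ^ 2 := pow_pos (norm_pos_iff.mpr hp₀) 2
      exact mul_pos h1 (mul_pos h2 h3)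
    calc (0 : ENNReal) < volume {p : ℝ | 0 < (1 - vel m p * V) * (E p * ‖δf p‖ ^ 2)} :=
          hopen.measure_pos volume ⟨p₀, hp₀mem⟩
      _ ≤ _ := measure_mono hsub
  have hJnonneg : 0 ≤ J := by
    rw [hJ]
    apply integral_nonneg
    intro p
    positivity
  have hIeq : (∫ p : ℝ, (1 - vel m p * V) * Real.exp (β * eps m p) * ‖δf p‖ ^ 2) = I := by
    rw [hI]; congr 1; ext p; rw [hE]; ring
  have hsplit' : J + Γ * (β ^ 2 * D * γ) * I = 0 := by rw [← hkdef]; exact hsplit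
  have hky : (β ^ 2 * D * γ) ≠ 0 := by positivity
  constructor
  · rw [hIeq]
    rw [show -(1 / (β ^ 2 * D * γ)) * J = -J / (β ^ 2 * D * γ) by ring]
    rw [eq_div_iff hky]
    linear_combination hsplit'
  · by_contra h
    push_neg at h
    have hpos := mul_pos (mul_pos h hk) hIpos
    linarith [hsplit, hJnonneg]
end
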